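/- For every integer n ≥ 1 and all real numbers c > 0, r > 0, the sum over all histories h ∈ H_n of [Γ(s(h))Γ(c+nr)/Γ(c+nr+s(h))] · ∏_{j=1}^n (r)_{h(j)}/h(j)! converges and equals ψ(c+nr) − ψ(c). -/

import Mathlib

open scoped BigOperators

/-- Rising factorial `(a)_z = a(a+1)⋯(a+z-1)`. -/
noncomputable def risingFac (a : ℝ) (z : ℕ) : ℝ := ∏ i ∈ Finset.range z, (a + i)

/-- Digamma function `ψ(x) = Γ'(x)/Γ(x)`. -/
noncomputable def psi (x : ℝ) : ℝ := deriv Real.Gamma x / Real.Gamma x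

/-- The set of histories `H_n`: length-`n` tuples of non-negative integers, not all zero. -/
def Hist (n : ℕ) : Type := {h : Fin n → ℕ // h ≠ 0}

/-- `s(h) = ∑_j h(j)`. -/
def histSum {n : ℕ} (h : Fin n → ℕ) : ℕ := ∑ j, h j

/-- The weight `Γ(s(h))Γ(c+nr)/Γ(c+nr+s(h)) · ∏_j (r)_{h(j)}/h(j)!` of a history `h`. -/
noncomputable def histWeight (n : ℕ) (c r : ℝ) (h : Fin n → ℕ) : ℝ :=
  Real.Gamma (histSum h) * Real.Gamma (c + n * r) / Real.Gamma (c + n * r + histSum h) *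
    ∏ j, risingFac r (h j) / (h j).factorial

open Filter Finset Set



lemma risingFac_zero (x : ℝ) : risingFac x 0 = 1 := by simp [risingFac]

lemma risingFac_succ (x : ℝ) (k : ℕ) : risingFac x (k + 1) = risingFac x k * (x + k) :=
  Finset.prod_range_succ _ _

lemma risingFac_one (x : ℝ) : risingFac x 1 = x := by simp [risingFac]

lemma risingFac_pos {x : ℝ} (hx : 0 < x) (k : ℕ) : 0 < risingFac x k :=
  Finset.prod_pos fun i _ => by positivity

lemma risingFac_succ_left (x : ℝ) (k : ℕ) :
    risingFac x (k + 1) = x * risingFac (x + 1) k := by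
  induction k with
  | zero => simp [risingFac_succ, risingFac_zero]
  | succ k ih =>
      rw [risingFac_succ, ih, risingFac_succ, mul_assoc]
      push_cast; ring_nf

lemma Gamma_add_nat {x : ℝ} (hx : 0 < x) (k : ℕ) :
    Real.Gamma (x + k) = risingFac x k * Real.Gamma x := by
  induction k with
  | zero => simp [risingFac_zero]
  | succ k ih =>
      have hxk : (0:ℝ) < x + k := by positivity
      have : x + (k + 1 : ℕ) = (x + k) + 1 := by push_cast; ring
      rw [this, Real.Gamma_add_one hxk.ne', ih, risingFac_succ]; ring

lemma psi_add_one {x : ℝ} (hx : 0 < x) : psi (x + 1) = psi x + 1 / x := by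
  have hd : DifferentiableAt ℝ Real.Gamma x :=
    Real.differentiableAt_Gamma fun m => by
      have : (0:ℝ) ≤ m := m.cast_nonneg
      intro h; rw [h] at hx; linarith
  have key : deriv Real.Gamma (x + 1) = Real.Gamma x + x * deriv Real.Gamma x := by
    have h1 : deriv (fun y => Real.Gamma (y + 1)) x = deriv Real.Gamma (x + 1) := by
      rw [deriv_comp_add_const]
    have h2 : (fun y => Real.Gamma (y + 1)) =ᶠ[nhds x] (fun y => y * Real.Gamma y) := by
      filter_upwards [eventually_gt_nhds hx] with y hy
      exact Real.Gamma_add_one hy.ne'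
    have h3 : deriv (fun y => y * Real.Gamma y) x
        = Real.Gamma x + x * deriv Real.Gamma x := by
      have := (hasDerivAt_id x).mul hd.hasDerivAt
      simpa [one_mul, Pi.mul_def] using this.deriv
    rw [← h1, h2.deriv_eq, h3]
  have hG : Real.Gamma x ≠ 0 := (Real.Gamma_pos_of_pos hx).ne'
  rw [psi, psi, key, Real.Gamma_add_one hx.ne']
  field_simp
  ring

lemma psi_add_nat {x : ℝ} (hx : 0 < x) (N : ℕ) :
    psi (x + N) = psi x + ∑ m ∈ Finset.range N, 1 / (x + m) := by
  induction N with
  | zero => simp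
  | succ N ih =>
      have hxN : (0:ℝ) < x + N := by positivity
      have : x + (N + 1 : ℕ) = (x + N) + 1 := by push_cast; ring
      rw [this, psi_add_one hxN, ih, Finset.sum_range_succ]; ring


lemma diffGamma {x : ℝ} (hx : 0 < x) : DifferentiableAt ℝ Real.Gamma x :=
  Real.differentiableAt_Gamma fun m => by
    have : (0:ℝ) ≤ m := m.cast_nonneg
    intro h; rw [h] at hx; linarith

lemma difflogGamma {x : ℝ} (hx : 0 < x) :
    DifferentiableAt ℝ (Real.log ∘ Real.Gamma) x :=
  (diffGamma hx).log (Real.Gamma_pos_of_pos hx).ne'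

lemma deriv_logGamma {x : ℝ} (hx : 0 < x) :
    deriv (Real.log ∘ Real.Gamma) x = psi x := by
  rw [Function.comp_def, deriv.log (diffGamma hx) (Real.Gamma_pos_of_pos hx).ne']
  rfl

lemma logGamma_rec {x : ℝ} (hx : 0 < x) :
    (Real.log ∘ Real.Gamma) (x + 1) = (Real.log ∘ Real.Gamma) x + Real.log x := by
  simp only [Function.comp_apply, Real.Gamma_add_one hx.ne',
    Real.log_mul hx.ne' (Real.Gamma_pos_of_pos hx).ne']
  ring

lemma psi_le_log {x : ℝ} (hx : 0 < x) :
    Real.log x ≤ psi (x + 1) ∧ psi (x + 1) ≤ Real.log (x + 1) := by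
  set f := Real.log ∘ Real.Gamma with hf
  have hc : ConvexOn ℝ (Ioi 0) f := Real.convexOn_log_Gamma
  have h1 : (0:ℝ) < x + 1 := by linarith
  have h2 : (0:ℝ) < x + 2 := by linarith
  constructor
  · have := hc.slope_le_deriv (mem_Ioi.mpr hx) (mem_Ioi.mpr h1) (by linarith)
      (difflogGamma h1)
    rw [slope_def_field, show x + 1 - x = (1:ℝ) by ring, div_one] at this
    have hr := logGamma_rec hx
    rw [deriv_logGamma h1] at this
    simp only [hf] at this hr
    linarith [hr]
  · have := hc.deriv_le_slope (mem_Ioi.mpr h1) (mem_Ioi.mpr h2) (by linarith)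
      (difflogGamma h1)
    rw [slope_def_field, show x + 2 - (x+1) = (1:ℝ) by ring, div_one,
      show x + 2 = (x + 1) + 1 by ring] at this
    have hr := logGamma_rec h1
    rw [deriv_logGamma h1] at this
    simp only [hf] at this hr
    linarith [hr]

lemma psi_bounds {x : ℝ} (hx : 1 < x) :
    Real.log (x - 1) ≤ psi x ∧ psi x ≤ Real.log x := by
  have h := psi_le_log (x := x - 1) (by linarith)
  rw [sub_add_cancel] at h
  exact ⟨h.1, by simpa using h.2⟩

lemma tendsto_log_shift (x : ℝ) :
    Tendsto (fun N : ℕ => Real.log (x + N) - Real.log N) atTop (nhds 0) := by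
  have h1 : Tendsto (fun N : ℕ => 1 + x / N) atTop (nhds 1) := by
    have h0 : Tendsto (fun N : ℕ => x / N) atTop (nhds 0) := by
      simpa [div_eq_mul_inv, mul_comm] using tendsto_one_div_atTop_nhds_zero_nat.const_mul x
    simpa using (tendsto_const_nhds (x := (1:ℝ))).add h0
  have h2 : Tendsto (fun N : ℕ => Real.log (1 + x / N)) atTop (nhds 0) := by
    have := (Real.continuousAt_log one_ne_zero).tendsto.comp h1
    simpa [Function.comp_def] using this
  apply h2.congr'
  filter_upwards [eventually_gt_atTop (Nat.ceil (|x| + 1))] with N hN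
  have hN0 : (0:ℝ) < N := by
    have : (1:ℝ) ≤ N := by exact_mod_cast Nat.one_le_iff_ne_zero.mpr (by omega)
    linarith
  have hxN : 0 < x + N := by
    have : |x| + 1 ≤ N := le_trans (Nat.le_ceil _) (by exact_mod_cast hN.le)
    have := neg_abs_le x
    linarith
  rw [show (1:ℝ) + x / N = (x + N) / N by field_simp; ring,
    Real.log_div hxN.ne' hN0.ne']

lemma psi_diff_tendsto {c b : ℝ} (hc : 0 < c) (hb : c ≤ b) :
    Tendsto (fun N : ℕ => psi (c + N) - psi (b + N)) atTop (nhds 0) := by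
  have hlow : Tendsto (fun N : ℕ =>
      (Real.log ((c-1) + N) - Real.log N) - (Real.log (b + N) - Real.log N))
      atTop (nhds 0) := by
    simpa using (tendsto_log_shift (c-1)).sub (tendsto_log_shift b)
  have hup : Tendsto (fun N : ℕ =>
      (Real.log (c + N) - Real.log N) - (Real.log ((b-1) + N) - Real.log N))
      atTop (nhds 0) := by
    simpa using (tendsto_log_shift c).sub (tendsto_log_shift (b-1))
  refine tendsto_of_tendsto_of_tendsto_of_le_of_le' hlow hup ?_ ?_
  · filter_upwards [eventually_ge_atTop 1] with N hN
    have hN1 : (1:ℝ) ≤ N := by exact_mod_cast hN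
    have hcN : 1 < c + N := by linarith
    have hbN : 1 < b + N := by linarith
    have h1 := (psi_bounds hcN).1
    have h2 := (psi_bounds hbN).2
    have : Real.log (c + N - 1) - Real.log (b + N) ≤ psi (c+N) - psi (b+N) := by
      linarith
    calc Real.log ((c-1) + N) - Real.log N - (Real.log (b + N) - Real.log N)
        = Real.log (c + N - 1) - Real.log (b + N) := by ring_nf
      _ ≤ _ := this
  · filter_upwards [eventually_ge_atTop 1] with N hN
    have hN1 : (1:ℝ) ≤ N := by exact_mod_cast hN
    have hcN : 1 < c + N := by linarith
    have hbN : 1 < b + N := by linarith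
    have h1 := (psi_bounds hcN).2
    have h2 := (psi_bounds hbN).1
    calc psi (c+N) - psi (b+N) ≤ Real.log (c+N) - Real.log (b + N - 1) := by linarith
      _ = (Real.log (c + N) - Real.log N) - (Real.log ((b-1) + N) - Real.log N) := by
          ring_nf


-- helper : HasSum from monotone partial sums
lemma hasSum_of_nonneg_of_tendsto {f : ℕ → ℝ} {S : ℝ} (h0 : ∀ i, 0 ≤ f i)
    (h : Tendsto (fun N => ∑ i ∈ Finset.range N, f i) atTop (nhds S)) : HasSum f S :=
  (hasSum_iff_tendsto_nat_of_nonneg h0 S).2 h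

-- 1 + sum ≤ prod
lemma one_add_sum_le_prod {K : ℕ} (x : ℕ → ℝ) (hx : ∀ i, 0 ≤ x i) :
    1 + ∑ i ∈ Finset.range K, x i ≤ ∏ i ∈ Finset.range K, (1 + x i) := by
  induction K with
  | zero => simp
  | succ K ih =>
      rw [Finset.sum_range_succ, Finset.prod_range_succ]
      have hp : (1:ℝ) ≤ ∏ i ∈ Finset.range K, (1 + x i) := by
        calc (1:ℝ) ≤ 1 + ∑ i ∈ Finset.range K, x i := by
              have : 0 ≤ ∑ i ∈ Finset.range K, x i :=
                Finset.sum_nonneg fun i _ => hx i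
              linarith
          _ ≤ _ := ih
      nlinarith [hx K, Finset.sum_nonneg (fun i (_ : i ∈ Finset.range K) => hx i)]

-- harmonic-type divergence
lemma tendsto_sum_inv_add_atTop {a : ℝ} (ha : 0 < a) :
    Tendsto (fun K => ∑ i ∈ Finset.range K, 1 / (a + i)) atTop atTop := by
  have key : ∀ K, (1 / (a + 1)) * (∑ i ∈ Finset.range K, 1 / ((i:ℝ) + 1))
      ≤ ∑ i ∈ Finset.range K, 1 / (a + i) := by
    intro K
    rw [Finset.mul_sum]
    apply Finset.sum_le_sum
    intro i _
    rw [div_mul_div_comm, one_mul]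
    apply one_div_le_one_div_of_le (by positivity)
    have : (0:ℝ) ≤ i := i.cast_nonneg
    nlinarith
  have h1 : Tendsto (fun K => ∑ i ∈ Finset.range K, 1 / ((i:ℝ) + 1)) atTop atTop := by
    have := Real.tendsto_sum_range_one_div_nat_succ_atTop
    simpa using this
  exact tendsto_atTop_mono key ((tendsto_const_mul_atTop_of_pos (by positivity)).2 h1)

-- ratio of rising factorials tends to 0
lemma risingFac_ratio_tendsto_zero {a b : ℝ} (ha : 0 < a) (hab : a < b) :
    Tendsto (fun K => risingFac a K / risingFac b K) atTop (nhds 0) := by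
  have hb : 0 < b := lt_trans ha hab
  have key : ∀ K, 1 + (b - a) * ∑ i ∈ Finset.range K, 1 / (a + i)
      ≤ risingFac b K / risingFac a K := by
    intro K
    have h1 : risingFac b K / risingFac a K
        = ∏ i ∈ Finset.range K, (1 + (b - a) * (1 / (a + i))) := by
      rw [risingFac, risingFac, ← Finset.prod_div_distrib]
      apply Finset.prod_congr rfl
      intro i _
      have hai : (0:ℝ) < a + i := by positivity
      field_simp
      ring
    rw [h1, Finset.mul_sum]
    refine one_add_sum_le_prod _ fun i => ?_
    have hai : (0:ℝ) < a + i := by positivity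
    have : (0:ℝ) ≤ 1 / (a + i) := by positivity
    nlinarith
  have h2 : Tendsto (fun K => risingFac b K / risingFac a K) atTop atTop := by
    apply tendsto_atTop_mono key
    apply tendsto_atTop_add_const_left
    exact (tendsto_const_mul_atTop_of_pos (by linarith)).2 (tendsto_sum_inv_add_atTop ha)
  have h3 : ∀ K, risingFac a K / risingFac b K = (risingFac b K / risingFac a K)⁻¹ := by
    intro K; rw [inv_div]
  rw [funext h3]
  exact h2.inv_tendsto_atTop


lemma risingFac_succ' (x : ℝ) (k : ℕ) :
    risingFac x (k + 2) = risingFac x (k+1) * (x + (k+1)) := by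
  rw [show k+2 = (k+1)+1 from rfl, risingFac_succ]; push_cast; ring

lemma tendsto_risingFac_atTop {b : ℝ} (_hb : 0 < b) (k : ℕ) :
    Tendsto (fun M : ℕ => risingFac (b + M) (k+1)) atTop atTop := by
  induction k with
  | zero =>
      have h : ∀ M : ℕ, risingFac (b + M) 1 = b + M := fun M => risingFac_one _
      rw [funext h]
      exact tendsto_atTop_add_const_left _ _ tendsto_natCast_atTop_atTop
  | succ k ih =>
      have h : ∀ M : ℕ, risingFac (b + M) (k+2)
          = risingFac (b + M) (k+1) * ((b + M) + (k+1)) := fun M => risingFac_succ' _ _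
      rw [funext h]
      apply ih.atTop_mul_atTop₀
      apply tendsto_atTop_add_const_right
      exact tendsto_atTop_add_const_left _ _ tendsto_natCast_atTop_atTop

section core
variable {a c : ℝ} (ha : 0 < a) (hc : 0 < c)

lemma g_diff {x : ℝ} (hx : 0 < x) (k : ℕ) :
    1 / risingFac x (k+1) - 1 / risingFac (x+1) (k+1)
      = (k+1) / risingFac x (k+2) := by
  have hR : 0 < risingFac (x+1) k := risingFac_pos (by linarith) k
  have e1 : risingFac x (k+1) = x * risingFac (x+1) k := risingFac_succ_left x k
  have e2 : risingFac (x+1) (k+1) = risingFac (x+1) k * (x + 1 + k) :=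
    risingFac_succ (x+1) k
  have e3 : risingFac x (k+2) = x * (risingFac (x+1) k * (x + 1 + k)) := by
    rw [show k+2 = (k+1)+1 from rfl, risingFac_succ_left, e2]
  rw [e1, e2, e3]
  have h1 : x + 1 + (k:ℝ) > 0 := by positivity
  field_simp
  ring

include ha hc in
lemma hrow (k : ℕ) :
    HasSum (fun m : ℕ => risingFac a (k+1) / risingFac ((c + a) + m) (k+2))
      (risingFac a (k+1) / ((k+1) * risingFac (c+a) (k+1))) := by
  have hbpos : (0:ℝ) < c + a := by positivity
  have hterm : ∀ m : ℕ, risingFac a (k+1) / risingFac ((c+a) + m) (k+2)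
      = (risingFac a (k+1) / (k+1:ℝ)) *
        ((fun m : ℕ => 1 / risingFac ((c+a) + m) (k+1)) m
          - (fun m : ℕ => 1 / risingFac ((c+a) + m) (k+1)) (m+1)) := by
    intro m
    have hbm : (0:ℝ) < (c+a) + m := by positivity
    simp only
    have : (c+a) + ((m+1 : ℕ) : ℝ) = ((c+a) + m) + 1 := by push_cast; ring
    rw [this, g_diff hbm k]
    have h2 := risingFac_pos hbm (k+2)
    field_simp
  have hps : ∀ M, ∑ m ∈ Finset.range M, risingFac a (k+1) / risingFac ((c+a) + m) (k+2)
      = (risingFac a (k+1) / (k+1:ℝ)) *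
        (1 / risingFac ((c+a) + (0:ℕ)) (k+1) - 1 / risingFac ((c+a) + M) (k+1)) := by
    intro M
    rw [Finset.sum_congr rfl fun m _ => hterm m, ← Finset.mul_sum,
      Finset.sum_range_sub' (fun m : ℕ => 1 / risingFac ((c+a) + m) (k+1))]
  apply hasSum_of_nonneg_of_tendsto
  · intro m
    have h1 := risingFac_pos ha (k+1)
    have h2 := risingFac_pos (show (0:ℝ) < (c+a) + m by positivity) (k+2)
    positivity
  · rw [funext hps]
    have hg : Tendsto (fun M : ℕ => 1 / risingFac ((c+a) + M) (k+1)) atTop (nhds 0) := by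
      simpa [Pi.inv_def] using (tendsto_risingFac_atTop hbpos k).inv_tendsto_atTop
    have hT : Tendsto (fun M : ℕ => (risingFac a (k+1) / (k+1:ℝ)) *
        (1 / risingFac ((c+a) + (0:ℕ)) (k+1) - 1 / risingFac ((c+a) + M) (k+1))) atTop
        (nhds ((risingFac a (k+1) / (k+1:ℝ)) *
          (1 / risingFac ((c+a) + (0:ℕ)) (k+1) - 0))) :=
      (tendsto_const_nhds.sub hg).const_mul _
    have heq : (risingFac a (k+1) / (k+1:ℝ)) *
        (1 / risingFac ((c+a) + (0:ℕ)) (k+1) - 0)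
        = risingFac a (k+1) / ((k+1) * risingFac (c+a) (k+1)) := by
      have h3 := risingFac_pos hbpos (k+1)
      simp only [Nat.cast_zero, add_zero, sub_zero]
      field_simp
    rwa [heq] at hT

include ha hc in
lemma hcol (m : ℕ) :
    HasSum (fun k : ℕ => risingFac a (k+1) / risingFac ((c + a) + m) (k+2))
      (1 / (c + m) - 1 / ((c + a) + m)) := by
  have hbm : (0:ℝ) < (c+a) + m := by positivity
  have hcm : (0:ℝ) < c + m := by positivity
  have hterm : ∀ k : ℕ, risingFac a (k+1) / risingFac ((c+a) + m) (k+2)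
      = (1/(c+m)) *
        ((fun k : ℕ => risingFac a (k+1) / risingFac ((c+a) + m) (k+1)) k
          - (fun k : ℕ => risingFac a (k+1) / risingFac ((c+a) + m) (k+1)) (k+1)) := by
    intro k
    simp only
    rw [risingFac_succ' ((c+a)+m) k, risingFac_succ' a k]
    have h1 := risingFac_pos hbm (k+1)
    have h2 := risingFac_pos ha (k+1)
    have h3 : (0:ℝ) < (c+a) + m + (k+1) := by positivity
    field_simp
    ring
  have hps : ∀ K, ∑ k ∈ Finset.range K, risingFac a (k+1) / risingFac ((c+a) + m) (k+2)
      = (1/(c+m)) * (risingFac a 1 / risingFac ((c+a) + m) 1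
          - risingFac a (K+1) / risingFac ((c+a) + m) (K+1)) := by
    intro K
    rw [Finset.sum_congr rfl fun k _ => hterm k, ← Finset.mul_sum,
      Finset.sum_range_sub' (fun k : ℕ => risingFac a (k+1) / risingFac ((c+a) + m) (k+1))]
  apply hasSum_of_nonneg_of_tendsto
  · intro k
    have h1 := risingFac_pos ha (k+1)
    have h2 := risingFac_pos hbm (k+2)
    positivity
  · rw [funext hps]
    have hr0 : Tendsto (fun K : ℕ => risingFac a (K+1) / risingFac ((c+a) + m) (K+1))
        atTop (nhds 0) := by
      have hab : a < (c+a) + m := by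
        have : (0:ℝ) ≤ m := m.cast_nonneg
        linarith
      exact (risingFac_ratio_tendsto_zero ha hab).comp (tendsto_add_atTop_nat 1)
    have hT : Tendsto (fun K : ℕ => (1/(c+m)) * (risingFac a 1 / risingFac ((c+a) + m) 1
        - risingFac a (K+1) / risingFac ((c+a) + m) (K+1))) atTop
        (nhds ((1/(c+m)) * (risingFac a 1 / risingFac ((c+a) + m) 1 - 0))) :=
      (tendsto_const_nhds.sub hr0).const_mul _
    have heq : (1/(c+m)) * (risingFac a 1 / risingFac ((c+a) + m) 1 - 0)
        = 1 / (c + m) - 1 / ((c + a) + m) := by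
      rw [risingFac_one, risingFac_one]
      field_simp
      ring
    rwa [heq] at hT
end core

lemma hasSum_Tser {a c S : ℝ} (ha : 0 < a) (hc : 0 < c)
    (hpsi : HasSum (fun m : ℕ => 1 / (c + m) - 1 / ((c + a) + m)) S) :
    HasSum (fun k : ℕ => risingFac a (k+1) / ((k+1) * risingFac (c+a) (k+1))) S := by
  classical
  set f : ℕ × ℕ → ℝ :=
    fun p => risingFac a (p.2+1) / risingFac ((c+a) + p.1) (p.2+2) with hf
  have hnn : 0 ≤ f := by
    intro p
    have h1 := risingFac_pos ha (p.2+1)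
    have h2 := risingFac_pos (show (0:ℝ) < (c+a) + p.1 by positivity) (p.2+2)
    positivity
  have hrowsum : ∀ m : ℕ, (∑' k, f (m, k)) = 1 / (c + m) - 1 / ((c + a) + m) :=
    fun m => (hcol ha hc m).tsum_eq
  have hsf : Summable f := by
    rw [summable_prod_of_nonneg hnn]
    refine ⟨fun m => (hcol ha hc m).summable, ?_⟩
    rw [funext hrowsum]
    exact hpsi.summable
  have h1 : ∑' p, f p = S := by
    rw [Summable.tsum_prod hsf, funext hrowsum, hpsi.tsum_eq]
  -- swap
  have hsg : Summable (fun p : ℕ × ℕ => f p.swap) := hsf.prod_symm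
  have hcolsum : ∀ k : ℕ, (∑' m, f (m, k))
      = risingFac a (k+1) / ((k+1) * risingFac (c+a) (k+1)) :=
    fun k => (hrow ha hc k).tsum_eq
  have h2 : ∑' p : ℕ × ℕ, f p.swap = ∑' p, f p := by
    have := (Equiv.prodComm ℕ ℕ).tsum_eq (f := f)
    simpa [Function.comp] using this
  have hTsummable : Summable
      (fun k : ℕ => risingFac a (k+1) / ((k+1) * risingFac (c+a) (k+1))) := by
    have hnng : 0 ≤ (fun p : ℕ × ℕ => f p.swap) := fun p => hnn p.swap
    have := ((summable_prod_of_nonneg hnng).1 hsg).2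
    simp only [Prod.swap] at this
    convert this using 1
    funext k
    rw [← hcolsum k]
  have h3 : (∑' k, risingFac a (k+1) / ((k+1) * risingFac (c+a) (k+1))) = S := by
    rw [← funext hcolsum]
    have hg := Summable.tsum_prod hsg
    simp only [Prod.swap] at hg h2
    rw [← hg, h2, h1]
  have := hTsummable.hasSum
  rwa [h3] at this


noncomputable def Q (x : ℝ) (k : ℕ) : ℝ := risingFac x k / k.factorial

lemma Q_zero (x : ℝ) : Q x 0 = 1 := by simp [Q, risingFac_zero]

lemma idQ (x : ℝ) (k : ℕ) : ((k:ℝ) + 1) * Q x (k+1) = (x + k) * Q x k := by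
  have h1 : (k.factorial : ℝ) ≠ 0 := Nat.cast_ne_zero.mpr k.factorial_ne_zero
  have h2 : ((k+1).factorial : ℝ) = ((k:ℝ)+1) * k.factorial := by
    rw [Nat.factorial_succ]; push_cast; ring
  rw [Q, Q, risingFac_succ, h2]
  field_simp

lemma vand2 (x y : ℝ) : ∀ κ : ℕ,
    ∑ p ∈ Finset.HasAntidiagonal.antidiagonal κ, Q x p.1 * Q y p.2 = Q (x+y) κ := by
  intro κ
  induction κ with
  | zero => simp [Q_zero]
  | succ κ ih =>
      have hκ : ((κ:ℝ) + 1) ≠ 0 := by positivity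
      have key : ((κ:ℝ) + 1) * ∑ p ∈ Finset.HasAntidiagonal.antidiagonal (κ+1), Q x p.1 * Q y p.2
          = ((κ:ℝ) + 1) * Q (x+y) (κ+1) := by
        rw [idQ (x+y) κ, ← ih, Finset.mul_sum]
        have step1 : ∀ p ∈ Finset.HasAntidiagonal.antidiagonal (κ+1),
            ((κ:ℝ) + 1) * (Q x p.1 * Q y p.2)
            = (p.1:ℝ) * (Q x p.1 * Q y p.2) + (p.2:ℝ) * (Q x p.1 * Q y p.2) := by
          intro p hp
          have := Finset.HasAntidiagonal.mem_antidiagonal.mp hp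
          have hcast : ((κ:ℝ) + 1) = (p.1:ℝ) + p.2 := by exact_mod_cast this.symm
          rw [hcast]; ring
        rw [Finset.sum_congr rfl step1, Finset.sum_add_distrib]
        have hA : ∑ p ∈ Finset.HasAntidiagonal.antidiagonal (κ+1), (p.1:ℝ) * (Q x p.1 * Q y p.2)
            = ∑ p ∈ Finset.HasAntidiagonal.antidiagonal κ, (x + p.1) * Q x p.1 * Q y p.2 := by
          rw [Finset.Nat.sum_antidiagonal_succ
            (f := fun p => (p.1:ℝ) * (Q x p.1 * Q y p.2))]
          simp only [Nat.cast_zero, zero_mul, zero_add]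
          apply Finset.sum_congr rfl
          intro p _
          push_cast
          linear_combination (Q y p.2) * idQ x p.1
        have hB : ∑ p ∈ Finset.HasAntidiagonal.antidiagonal (κ+1), (p.2:ℝ) * (Q x p.1 * Q y p.2)
            = ∑ p ∈ Finset.HasAntidiagonal.antidiagonal κ, (y + p.2) * Q x p.1 * Q y p.2 := by
          rw [Finset.Nat.sum_antidiagonal_succ'
            (f := fun p => (p.2:ℝ) * (Q x p.1 * Q y p.2))]
          simp only [Nat.cast_zero, zero_mul, zero_add]
          apply Finset.sum_congr rfl
          intro p _
          push_cast
          linear_combination (Q x p.1) * idQ y p.2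
        rw [hA, hB, ← Finset.sum_add_distrib, Finset.mul_sum]
        apply Finset.sum_congr rfl
        intro p hp
        have hmem := Finset.HasAntidiagonal.mem_antidiagonal.mp hp
        have hcast : (p.1:ℝ) + p.2 = (κ:ℝ) := by exact_mod_cast hmem
        linear_combination (Q x p.1 * Q y p.2) * hcast
      exact mul_left_cancel₀ hκ key

lemma sum_antidiagonalTuple_succ {M : Type*} [AddCommMonoid M] (n κ : ℕ)
    (g : (Fin (n+1) → ℕ) → M) :
    ∑ h ∈ Finset.Nat.antidiagonalTuple (n+1) κ, g h
      = ∑ p ∈ Finset.HasAntidiagonal.antidiagonal κ,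
          ∑ t ∈ Finset.Nat.antidiagonalTuple n p.2, g (Fin.cons p.1 t) := by
  rw [← Finset.sum_sigma (Finset.HasAntidiagonal.antidiagonal κ)
    (fun p => Finset.Nat.antidiagonalTuple n p.2)
    (fun x => g (Fin.cons x.1.1 x.2))]
  apply Finset.sum_nbij' (i := fun h => (⟨(h 0, ∑ j, Fin.tail h j), Fin.tail h⟩ :
      Σ _p : ℕ × ℕ, Fin n → ℕ))
    (j := fun x => Fin.cons x.1.1 x.2)
  · intro h hm
    have hs := Finset.Nat.mem_antidiagonalTuple.mp hm
    rw [Finset.mem_sigma]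
    constructor
    · rw [Finset.HasAntidiagonal.mem_antidiagonal]
      rw [← hs, Fin.sum_univ_succ]
      rfl
    · exact Finset.Nat.mem_antidiagonalTuple.mpr rfl
  · intro x hx
    rw [Finset.mem_sigma] at hx
    have h1 := Finset.HasAntidiagonal.mem_antidiagonal.mp hx.1
    have h2 := Finset.Nat.mem_antidiagonalTuple.mp hx.2
    apply Finset.Nat.mem_antidiagonalTuple.mpr
    rw [Fin.sum_cons, h2, h1]
  · intro h _
    exact Fin.cons_self_tail h
  · intro x hx
    rw [Finset.mem_sigma] at hx
    have h2 := Finset.Nat.mem_antidiagonalTuple.mp hx.2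
    obtain ⟨⟨u, v⟩, t⟩ := x
    simp only [Fin.cons_zero, Fin.tail_cons]
    simp only at h2
    subst h2
    rfl
  · intro h _
    exact (congrArg g (Fin.cons_self_tail h)).symm

lemma vandN : ∀ (n : ℕ) (x : ℝ) (κ : ℕ),
    ∑ h ∈ Finset.Nat.antidiagonalTuple n κ, ∏ j, Q x (h j) = Q ((n:ℝ)*x) κ := by
  intro n
  induction n with
  | zero =>
      intro x κ
      cases κ with
      | zero => simp [Q_zero]
      | succ κ =>
          simp only [Finset.Nat.antidiagonalTuple_zero_succ, Finset.sum_empty]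
          rw [Nat.cast_zero, zero_mul, Q, risingFac_succ_left]
          simp
  | succ n ih =>
      intro x κ
      rw [sum_antidiagonalTuple_succ]
      have step : ∀ p ∈ Finset.HasAntidiagonal.antidiagonal κ,
          ∑ t ∈ Finset.Nat.antidiagonalTuple n p.2,
            ∏ j, Q x ((Fin.cons p.1 t : Fin (n+1) → ℕ) j)
          = Q x p.1 * Q ((n:ℝ)*x) p.2 := by
        intro p _
        have : ∀ t : Fin n → ℕ, ∏ j, Q x ((Fin.cons p.1 t : Fin (n+1) → ℕ) j)
            = Q x p.1 * ∏ j, Q x (t j) := by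
          intro t
          rw [Fin.prod_univ_succ]
          simp [Fin.cons_zero, Fin.cons_succ]
        rw [Finset.sum_congr rfl fun t _ => this t, ← Finset.mul_sum, ih x p.2]
      rw [Finset.sum_congr rfl step, vand2 x ((n:ℝ)*x) κ]
      congr 1
      push_cast
      ring


lemma hasSum_psi_series {c b : ℝ} (hc : 0 < c) (hcb : c ≤ b) :
    HasSum (fun m : ℕ => 1 / (c + m) - 1 / (b + m)) (psi b - psi c) := by
  have hb : 0 < b := lt_of_lt_of_le hc hcb
  apply hasSum_of_nonneg_of_tendsto
  · intro m
    have h1 : (0:ℝ) < c + m := by positivity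
    have h2 : c + m ≤ b + m := by linarith
    have := one_div_le_one_div_of_le h1 h2
    linarith
  · have hps : ∀ N : ℕ, ∑ m ∈ Finset.range N, (1 / (c + m) - 1 / (b + m))
        = (psi b - psi c) + (psi (c + N) - psi (b + N)) := by
      intro N
      rw [Finset.sum_sub_distrib]
      have h1 := psi_add_nat hc N
      have h2 := psi_add_nat hb N
      linarith
    rw [funext hps]
    have := psi_diff_tendsto hc hcb
    simpa using tendsto_const_nhds.add this

noncomputable def Tk (b a : ℝ) (k : ℕ) : ℝ :=
  Real.Gamma k * Real.Gamma b / Real.Gamma (b + k) * Q a k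

lemma Tk_zero (b a : ℝ) : Tk b a 0 = 0 := by
  simp [Tk, Real.Gamma_zero]

lemma Tk_succ {b : ℝ} (hb : 0 < b) (a : ℝ) (k : ℕ) :
    Tk b a (k+1) = risingFac a (k+1) / ((k+1) * risingFac b (k+1)) := by
  have hΓ : Real.Gamma ((k+1 : ℕ):ℝ) = (k.factorial : ℝ) := by
    push_cast
    exact_mod_cast Real.Gamma_nat_eq_factorial k
  have hΓ2 : Real.Gamma (b + ((k+1:ℕ):ℝ)) = risingFac b (k+1) * Real.Gamma b :=
    Gamma_add_nat hb (k+1)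
  have h1 : Real.Gamma b ≠ 0 := (Real.Gamma_pos_of_pos hb).ne'
  have h2 : risingFac b (k+1) ≠ 0 := (risingFac_pos hb (k+1)).ne'
  have h3 : (k.factorial : ℝ) ≠ 0 := Nat.cast_ne_zero.mpr k.factorial_ne_zero
  have h4 : (((k+1).factorial : ℕ) : ℝ) = ((k:ℝ)+1) * (k.factorial : ℝ) := by
    rw [Nat.factorial_succ]; push_cast; ring
  rw [Tk, hΓ, hΓ2, Q, h4]
  field_simp

lemma hasSum_Tk {a c : ℝ} (ha : 0 < a) (hc : 0 < c) :
    HasSum (Tk (c+a) a) (psi (c+a) - psi c) := by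
  have hb : (0:ℝ) < c + a := by linarith
  have hψ := hasSum_psi_series hc (show c ≤ c + a by linarith)
  have h1 : (fun k : ℕ => Tk (c+a) a (k+1))
      = fun k : ℕ => risingFac a (k+1) / ((k+1) * risingFac (c+a) (k+1)) :=
    funext fun k => Tk_succ hb a k
  have h2 : HasSum (fun k : ℕ => Tk (c+a) a (k+1)) (psi (c+a) - psi c) := by
    rw [h1]; exact hasSum_Tser ha hc hψ
  have h3 := (hasSum_nat_add_iff (f := Tk (c+a) a) 1).1 h2
  simpa [Tk_zero] using h3

lemma fiber_sum (n : ℕ) (c r : ℝ) (k : ℕ) :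
    ∑ h ∈ Finset.Nat.antidiagonalTuple n k, histWeight n c r h
      = Tk (c + n*r) ((n:ℝ)*r) k := by
  have step : ∀ h ∈ Finset.Nat.antidiagonalTuple n k, histWeight n c r h
      = Real.Gamma k * Real.Gamma (c + n*r) / Real.Gamma (c + n*r + k)
          * ∏ j, Q r (h j) := by
    intro h hm
    have hs : histSum h = k := Finset.Nat.mem_antidiagonalTuple.mp hm
    rw [histWeight, hs]
    simp only [Q]
  rw [Finset.sum_congr rfl step, ← Finset.mul_sum, vandN n r k, Tk]

theorem stmt_10 (n : ℕ) (hn : 1 ≤ n) (c r : ℝ) (hc : 0 < c) (hr : 0 < r) :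
    HasSum (fun h : Hist n => histWeight n c r h.1) (psi (c + n * r) - psi c) := by
  classical
  have hn1 : (1:ℝ) ≤ n := by exact_mod_cast hn
  have ha : (0:ℝ) < (n:ℝ) * r := by nlinarith
  have hb : (0:ℝ) < c + (n:ℝ) * r := by linarith
  set W : (Fin n → ℕ) → ℝ := histWeight n c r with hW
  have hWnn : ∀ h, 0 ≤ W h := by
    intro h
    rw [hW, histWeight]
    have h1 : 0 ≤ Real.Gamma ((histSum h : ℕ) : ℝ) := by
      rcases Nat.eq_zero_or_pos (histSum h) with h0 | h0
      · rw [h0]; simp [Real.Gamma_zero]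
      · exact (Real.Gamma_pos_of_pos (by exact_mod_cast h0)).le
    have h2 : 0 < Real.Gamma (c + (n:ℝ)*r) := Real.Gamma_pos_of_pos hb
    have h3 : 0 < Real.Gamma (c + (n:ℝ)*r + (histSum h : ℕ)) :=
      Real.Gamma_pos_of_pos (by positivity)
    have h4 : 0 ≤ ∏ j, risingFac r (h j) / ((h j).factorial : ℝ) :=
      Finset.prod_nonneg fun j _ => by
        have := (risingFac_pos hr (h j)).le
        positivity
    positivity
  have hT : HasSum (Tk (c + (n:ℝ)*r) ((n:ℝ)*r)) (psi (c + (n:ℝ)*r) - psi c) :=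
    hasSum_Tk ha hc
  -- fibers
  have hfin : ∀ k : ℕ, ({h : Fin n → ℕ | histSum h = k}).Finite := fun k =>
    Set.Finite.ofFinset (Finset.Nat.antidiagonalTuple n k)
      (fun h => by simp [Finset.Nat.mem_antidiagonalTuple, histSum, Set.mem_setOf_eq])
  haveI hFT : ∀ k : ℕ, Fintype {h : Fin n → ℕ // histSum h = k} := fun k =>
    (hfin k).fintype
  have hfib : ∀ k : ℕ, HasSum (fun h : {h : Fin n → ℕ // histSum h = k} => W h.1)
      (Tk (c + (n:ℝ)*r) ((n:ℝ)*r) k) := by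
    intro k
    have h1 := hasSum_fintype (fun h : {h : Fin n → ℕ // histSum h = k} => W h.1)
    have h2 : ∑ h ∈ Finset.Nat.antidiagonalTuple n k, W h
        = ∑ h : {h : Fin n → ℕ // histSum h = k}, W h.1 :=
      Finset.sum_subtype (Finset.Nat.antidiagonalTuple n k)
        (fun h => by simp [Finset.Nat.mem_antidiagonalTuple, histSum]) W
    rw [← h2, hW, fiber_sum n c r k] at h1
    exact h1
  -- sigma
  set σ : (Σ k : ℕ, {h : Fin n → ℕ // histSum h = k}) ≃ (Fin n → ℕ) :=
    Equiv.sigmaFiberEquiv (fun h : Fin n → ℕ => histSum h) with hσ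
  have hfib' : ∀ k : ℕ, HasSum
      (fun h : {h : Fin n → ℕ // histSum h = k} => W (σ ⟨k, h⟩))
      (Tk (c + (n:ℝ)*r) ((n:ℝ)*r) k) := hfib
  have hnnσ : ∀ x : (Σ k : ℕ, {h : Fin n → ℕ // histSum h = k}), 0 ≤ W (σ x) :=
    fun x => hWnn _
  have hsummσ : Summable (fun x : (Σ k : ℕ, {h : Fin n → ℕ // histSum h = k}) => W (σ x)) := by
    apply (summable_sigma_of_nonneg hnnσ).2
    refine ⟨fun k => (hfib' k).summable, ?_⟩
    have heq : (fun k : ℕ => ∑' h : {h : Fin n → ℕ // histSum h = k}, W (σ ⟨k, h⟩))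
        = Tk (c + (n:ℝ)*r) ((n:ℝ)*r) := funext fun k => (hfib' k).tsum_eq
    rw [heq]
    exact hT.summable
  have hsig : HasSum (fun x : (Σ k : ℕ, {h : Fin n → ℕ // histSum h = k}) => W (σ x))
      (psi (c + (n:ℝ)*r) - psi c) :=
    HasSum.of_sigma hfib' hT (Filter.Tendsto.cauchySeq hsummσ.hasSum)
  have hfull : HasSum W (psi (c + (n:ℝ)*r) - psi c) := σ.hasSum_iff.mp hsig
  -- subtype
  have hsupp : Function.support W ⊆ {h : Fin n → ℕ | h ≠ 0} := by
    intro h hh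
    simp only [Function.mem_support] at hh
    intro h0
    apply hh
    rw [hW, h0]
    simp [histWeight, histSum, Real.Gamma_zero]
  have := (hasSum_subtype_iff_of_support_subset hsupp).2 hfull
  exact this
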